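/- (Proposition 3(b)) Let ℓ, m ∈ F be cycles with ⟨ℓ, p⟩ = 0, ⟨m, p⟩ = 0, ⟨ℓ, ℓ⟩ = ⟨m, m⟩ > 0, and ℓ ≠ m, ℓ ≠ −m. Then there exists ε ∈ {1, −1} such that the cycle n = ℓ − ε·m satisfies ⟨n, n⟩ > 0 and ⟨n, p⟩ = 0, and the reflection along n maps ℓ to ε·m, i.e., ℓ − 2(⟨ℓ, n⟩/⟨n, n⟩)·n = ε·m. -/

import Mathlib

variable {K : Type*} [Field K] [LinearOrder K] [IsStrictOrderedRing K]
variable {E : Type*} [AddCommGroup E] [Module K E]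

/-- The cycle pairing on the space of cycles `F = K × E × K`:
`⟨(a,b,c),(a',b',c')⟩ = B(b,b') − 2ac' − 2a'c`. -/
def cyc (B : LinearMap.BilinForm K E) (f g : K × E × K) : K :=
  B f.2.1 g.2.1 - 2 * f.1 * g.2.2 - 2 * g.1 * f.2.2

/-- The normalized zero circle centered at `u`: the cycle `(1, −2u, B(u,u))`. -/
def qc (B : LinearMap.BilinForm K E) (u : E) : K × E × K :=
  (1, (-2 : K) • u, B u u)


lemma cyc_sub_smul_left (B : LinearMap.BilinForm K E) (e : K) (l m g : K × E × K) :
    cyc B (l - e • m) g = cyc B l g - e * cyc B m g := by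
  simp only [cyc, Prod.fst_sub, Prod.snd_sub, Prod.smul_fst, Prod.smul_snd, smul_eq_mul,
    map_sub, map_smul, LinearMap.sub_apply, LinearMap.smul_apply]
  ring

lemma cyc_sub_smul_right (B : LinearMap.BilinForm K E) (e : K) (l m g : K × E × K) :
    cyc B g (l - e • m) = cyc B g l - e * cyc B g m := by
  simp only [cyc, Prod.fst_sub, Prod.snd_sub, Prod.smul_fst, Prod.smul_snd, smul_eq_mul,
    map_sub, map_smul, LinearMap.sub_apply, LinearMap.smul_apply]
  ring

lemma cyc_symm (B : LinearMap.BilinForm K E) (hsymm : ∀ x y : E, B x y = B y x)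
    (f g : K × E × K) : cyc B f g = cyc B g f := by
  simp only [cyc, hsymm f.2.1 g.2.1]; ring

/-- Proposition 3(b): given two cycles `ℓ, m` orthogonal to `p` of the same positive
norm, for a suitable sign `ε` the cycle `n = ℓ − ε·m` has positive norm, is orthogonal
to `p`, and the reflection along `n` maps `ℓ` to `ε·m`. -/
theorem prop3b_reflection_between_lines
    (B : LinearMap.BilinForm K E)
    (heuc : ∀ x : K, 0 ≤ x → ∃ y : K, y * y = x)
    (hdim : Module.finrank K E = 2)
    (hsymm : ∀ x y : E, B x y = B y x)
    (hpos : ∀ x : E, x ≠ 0 → 0 < B x x)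
    (i : E) (hi : B i i = 1)
    (l m : K × E × K)
    (hlp : cyc B l ((0 : K), i, (0 : K)) = 0)
    (hmp : cyc B m ((0 : K), i, (0 : K)) = 0)
    (hnorm : cyc B l l = cyc B m m) (hlpos : 0 < cyc B l l)
    (hne : l ≠ m) (hne' : l ≠ -m) :
    ∃ e : K, (e = 1 ∨ e = -1) ∧
      0 < cyc B (l - e • m) (l - e • m) ∧
      cyc B (l - e • m) ((0 : K), i, (0 : K)) = 0 ∧
      l - (2 * (cyc B l (l - e • m) / cyc B (l - e • m) (l - e • m))) • (l - e • m)
        = e • m := by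

  -- choose the sign e so that e * ⟨l,m⟩ ≤ 0
  obtain ⟨e, he, hle⟩ : ∃ e : K, (e = 1 ∨ e = -1) ∧ e * cyc B l m ≤ 0 := by
    rcases le_or_gt (cyc B l m) 0 with h | h
    · exact ⟨1, Or.inl rfl, by simpa using h⟩
    · exact ⟨-1, Or.inr rfl, by nlinarith⟩
  have hee : e * e = 1 := by rcases he with h | h <;> simp [h]
  have hml : cyc B m l = cyc B l m := cyc_symm B hsymm m l
  have hnn : cyc B (l - e • m) (l - e • m)
      = 2 * (cyc B l l - e * cyc B l m) := by
    rw [cyc_sub_smul_left, cyc_sub_smul_right, cyc_sub_smul_right, hml, ← hnorm]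
    ring_nf
    nlinarith [hee]
  have hpos' : 0 < cyc B (l - e • m) (l - e • m) := by
    rw [hnn]; nlinarith
  refine ⟨e, he, hpos', ?_, ?_⟩
  · rw [cyc_sub_smul_left, hlp, hmp]; ring
  · have hln : cyc B l (l - e • m) = cyc B l l - e * cyc B l m :=
      cyc_sub_smul_right B e l m l
    have hne0 : cyc B l l - e * cyc B l m ≠ 0 := by nlinarith
    have : (2 : K) * (cyc B l (l - e • m) / cyc B (l - e • m) (l - e • m)) = 1 := by
      rw [hln, hnn]
      field_simp
    rw [this, one_smul]
    abel
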